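/- arXiv:2103.05593 — 3 statements merged into one kernel-verified Lean document; each statement's English description precedes it below -/
import Mathlib

section
/- Let ℓ > 4 and let r_1, …, r_ℓ : [n]×[n] → [n] be independent uniformly random functions. Then with probability 1 − o(1) as n → ∞, for every S ⊆ [n] with |S| = m and m^(ℓ+2) ≤ n^(ℓ+1), the number of ordered pairs (i,j) ∈ S × S such that r_k(i,j) ∈ S for all k ∈ [ℓ] is at most ℓ·n. -/
open Filter Finset

section helpers

lemma succ_pow_le_three' (t : ℕ) : ((t:ℝ)+1)^t ≤ 3 * (t:ℝ)^t := by
  rcases Nat.eq_zero_or_pos t with h|h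
  · simp [h]
  · have ht : (0:ℝ) < t := by exact_mod_cast h
    have h2 : (1 + 1/(t:ℝ)) ≤ Real.exp (1/t) := by
      have := Real.add_one_le_exp (1/(t:ℝ)); linarith
    calc ((t:ℝ)+1)^t = t^t * (1+1/t)^t := by
          rw [← mul_pow]; congr 1; field_simp
    _ ≤ (t:ℝ)^t * (Real.exp (1/t))^t := by
        have hnn : (0:ℝ) ≤ 1 + 1/t := by positivity
        exact mul_le_mul_of_nonneg_left (pow_le_pow_left₀ hnn h2 t) (by positivity)
    _ = (t:ℝ)^t * Real.exp 1 := by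
        rw [← Real.exp_nat_mul]; congr 1; field_simp
    _ ≤ 3 * (t:ℝ)^t := by
        have := Real.exp_one_lt_d9
        nlinarith [pow_nonneg ht.le t]

lemma pow_le_three_pow_mul_factorial' (t : ℕ) : (t:ℝ)^t ≤ 3^t * (t.factorial) := by
  induction t with
  | zero => simp
  | succ t ih =>
    have h2 : ((t:ℝ)+1)^t ≤ 3 * (t:ℝ)^t := succ_pow_le_three' t
    have h3 : ((t+1:ℕ):ℝ)^(t+1) = ((t:ℝ)+1)^t * ((t:ℝ)+1) := by push_cast; ring
    have h4 : (3:ℝ)^(t+1) * ((t+1).factorial) = 3 * (3^t * t.factorial) * ((t:ℝ)+1) := by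
      rw [Nat.factorial_succ]; push_cast; ring
    rw [h3, h4]
    have hpos : (0:ℝ) ≤ (t:ℝ)+1 := by positivity
    exact mul_le_mul_of_nonneg_right
      (h2.trans (by nlinarith [ih] : 3*(t:ℝ)^t ≤ 3*(3^t * t.factorial))) hpos

lemma analysis' (ℓ n : ℕ) (hℓ : 5 ≤ ℓ) (hn : 1 ≤ n) :
    (2:ℝ)^n * n^(ℓ*n+1) / (ℓ*n+1).factorial ≤ (486/3125 : ℝ)^n := by
  set t := ℓ*n+1 with ht
  have hnR : (0:ℝ) < n := by exact_mod_cast hn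
  have hlR : (0:ℝ) < ℓ := by positivity
  have htR : (0:ℝ) < t := by positivity
  have hfac : (0:ℝ) < t.factorial := by exact_mod_cast t.factorial_pos
  have h1 := pow_le_three_pow_mul_factorial' t
  have key : (n:ℝ)^t / t.factorial ≤ (3*n/t)^t := by
    rw [div_pow, mul_pow, div_le_div_iff₀ hfac (by positivity)]
    calc (n:ℝ)^t * t^t ≤ (n:ℝ)^t * (3^t * t.factorial) := by
          apply mul_le_mul_of_nonneg_left h1 (by positivity)
      _ = 3^t * n^t * t.factorial := by ring
  have key2 : (3*(n:ℝ)/t) ≤ 3/ℓ := by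
    have h2 : (ℓ:ℝ)*n ≤ t := by
      have : (ℓ*n : ℕ) ≤ t := by omega
      exact_mod_cast this
    rw [div_le_div_iff₀ htR hlR]
    nlinarith
  have key3 : ((3:ℝ)/ℓ) ≤ 3/5 := by
    apply div_le_div_of_nonneg_left (by norm_num) (by norm_num)
    exact_mod_cast hℓ
  have key4 : (3*(n:ℝ)/t)^t ≤ (3/ℓ)^t := by
    apply pow_le_pow_left₀ (by positivity) key2
  have key5 : ((3:ℝ)/ℓ)^t ≤ (3/ℓ)^(ℓ*n) := by
    apply pow_le_pow_of_le_one (by positivity) (by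
      rw [div_le_one hlR]; norm_num; linarith) (by omega)
  calc (2:ℝ)^n * n^t / t.factorial = 2^n * ((n:ℝ)^t / t.factorial) := by ring
    _ ≤ 2^n * (3/ℓ)^(ℓ*n) := by
        apply mul_le_mul_of_nonneg_left ((key.trans key4).trans key5) (by positivity)
    _ = (2 * ((3/ℓ:ℝ))^ℓ)^n := by rw [mul_pow, pow_mul]
    _ ≤ (486/3125 : ℝ)^n := by
        apply pow_le_pow_left₀ (by positivity)
        have h6 : ((3:ℝ)/ℓ)^ℓ ≤ (3/5)^ℓ := pow_le_pow_left₀ (by positivity) key3 ℓ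
        have h5 : ((3:ℝ)/5)^ℓ ≤ (3/5)^5 := pow_le_pow_of_le_one (by norm_num) (by norm_num) hℓ
        norm_num
        nlinarith

variable {n ℓ : ℕ}

lemma cardET' (S : Finset (Fin n)) (T : Finset (Fin n × Fin n)) :
    (univ.filter (fun r : Fin ℓ → (Fin n × Fin n → Fin n) => ∀ p ∈ T, ∀ k, r k p ∈ S)).card
      = (S.card ^ T.card * n ^ (n*n - T.card)) ^ ℓ := by
  classical
  have hF : (univ.filter (fun r : Fin ℓ → (Fin n × Fin n → Fin n) => ∀ p ∈ T, ∀ k, r k p ∈ S))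
      = Fintype.piFinset (fun _ : Fin ℓ =>
          Fintype.piFinset (fun p : Fin n × Fin n => if p ∈ T then S else univ)) := by
    ext r
    simp only [mem_filter, mem_univ, true_and, Fintype.mem_piFinset]
    constructor
    · intro h k p
      by_cases hp : p ∈ T
      · simp [hp, h p hp k]
      · simp [hp]
    · intro h p hp k
      have := h k p
      simpa [hp] using this
  rw [hF, Fintype.card_piFinset]
  rw [prod_const, Fintype.card_piFinset]
  have : ∏ p : Fin n × Fin n, (if p ∈ T then S else univ).card
      = S.card ^ T.card * n ^ (n*n - T.card) := by
    simp only [apply_ite Finset.card]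
    rw [Finset.prod_ite, Finset.prod_const, Finset.prod_const, Finset.filter_univ_mem]
    congr 1
    have : Finset.filter (fun p => p ∉ T) univ = Tᶜ := by ext p; simp
    rw [this, card_compl]
    simp [Fintype.card_prod]
  rw [this, card_univ, Fintype.card_fin]

lemma cardBadS' (S : Finset (Fin n)) (t : ℕ) :
    (univ.filter (fun r : Fin ℓ → (Fin n × Fin n → Fin n) =>
        t ≤ (univ.filter (fun p : Fin n × Fin n => p.1 ∈ S ∧ p.2 ∈ S ∧ ∀ k, r k p ∈ S)).card)).card
      ≤ (S.card * S.card).choose t * (S.card ^ t * n ^ (n*n - t)) ^ ℓ := by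
  classical
  have hsub : (univ.filter (fun r : Fin ℓ → (Fin n × Fin n → Fin n) =>
        t ≤ (univ.filter (fun p : Fin n × Fin n => p.1 ∈ S ∧ p.2 ∈ S ∧ ∀ k, r k p ∈ S)).card))
      ⊆ (Finset.powersetCard t (S ×ˢ S)).biUnion
          (fun T => univ.filter (fun r : Fin ℓ → (Fin n × Fin n → Fin n) => ∀ p ∈ T, ∀ k, r k p ∈ S)) := by
    intro r hr
    simp only [mem_filter, mem_univ, true_and] at hr
    obtain ⟨T, hT, hTc⟩ := Finset.exists_subset_card_eq hr
    refine Finset.mem_biUnion.2 ⟨T, ?_, ?_⟩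
    · rw [Finset.mem_powersetCard]
      refine ⟨?_, hTc⟩
      intro p hp
      have := hT hp
      simp only [mem_filter, mem_univ, true_and] at this
      exact Finset.mem_product.2 ⟨this.1, this.2.1⟩
    · simp only [mem_filter, mem_univ, true_and]
      intro p hp k
      have := hT hp
      simp only [mem_filter, mem_univ, true_and] at this
      exact this.2.2 k
  calc _ ≤ _ := Finset.card_le_card hsub
  _ ≤ ∑ T ∈ Finset.powersetCard t (S ×ˢ S),
        (univ.filter (fun r : Fin ℓ → (Fin n × Fin n → Fin n) => ∀ p ∈ T, ∀ k, r k p ∈ S)).card :=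
      Finset.card_biUnion_le
  _ = ∑ T ∈ Finset.powersetCard t (S ×ˢ S), (S.card ^ t * n ^ (n*n - t)) ^ ℓ := by
      apply Finset.sum_congr rfl
      intro T hT
      rw [cardET' S T, (Finset.mem_powersetCard.1 hT).2]
  _ = _ := by
      rw [Finset.sum_const, Finset.card_powersetCard, Finset.card_product, smul_eq_mul]

lemma perS' (m t : ℕ) (hS : m ^ (ℓ + 2) ≤ n ^ (ℓ + 1)) (htn : t ≤ n * n) :
    ((m * m).choose t * (m ^ t * n ^ (n*n - t)) ^ ℓ) * t.factorial
      ≤ n ^ t * (n ^ (n*n)) ^ ℓ := by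
  have h1 : t.factorial * (m*m).choose t ≤ (m*m) ^ t := by
    rw [← Nat.descFactorial_eq_factorial_mul_choose]
    exact Nat.descFactorial_le_pow _ _
  calc ((m * m).choose t * (m ^ t * n ^ (n*n - t)) ^ ℓ) * t.factorial
      = (t.factorial * (m*m).choose t) * (m ^ t * n ^ (n*n - t)) ^ ℓ := by ring
    _ ≤ (m*m) ^ t * (m ^ t * n ^ (n*n - t)) ^ ℓ := Nat.mul_le_mul_right _ h1
    _ = (m ^ (ℓ+2)) ^ t * (n ^ (n*n - t)) ^ ℓ := by ring
    _ ≤ (n ^ (ℓ+1)) ^ t * (n ^ (n*n - t)) ^ ℓ :=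
        Nat.mul_le_mul_right _ (Nat.pow_le_pow_left hS t)
    _ = n ^ t * (n ^ (n*n)) ^ ℓ := by
        obtain ⟨u, hu⟩ : ∃ u, n*n = u + t := ⟨n*n - t, by omega⟩
        have h2 : n*n - t = u := by omega
        rw [h2, hu]
        ring

lemma mainBoundNat' (hℓ : 5 ≤ ℓ) (hn : ℓ + 1 ≤ n)
    [DecidablePred (fun r : Fin ℓ → (Fin n × Fin n → Fin n) =>
        ¬ ∀ S : Finset (Fin n), S.card ^ (ℓ + 2) ≤ n ^ (ℓ + 1) →
          (univ.filter (fun p : Fin n × Fin n => p.1 ∈ S ∧ p.2 ∈ S ∧ ∀ k, r k p ∈ S)).card ≤ ℓ * n)] :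
    ((univ.filter (fun r : Fin ℓ → (Fin n × Fin n → Fin n) =>
        ¬ ∀ S : Finset (Fin n), S.card ^ (ℓ + 2) ≤ n ^ (ℓ + 1) →
          (univ.filter (fun p : Fin n × Fin n => p.1 ∈ S ∧ p.2 ∈ S ∧ ∀ k, r k p ∈ S)).card ≤ ℓ * n)).card)
      * (ℓ*n+1).factorial
      ≤ 2 ^ n * n ^ (ℓ*n+1) * (n ^ (n*n)) ^ ℓ := by
  classical
  set t := ℓ * n + 1 with ht
  have htn : t ≤ n * n := by nlinarith
  have step1 : (univ.filter (fun r : Fin ℓ → (Fin n × Fin n → Fin n) =>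
        ¬ ∀ S : Finset (Fin n), S.card ^ (ℓ + 2) ≤ n ^ (ℓ + 1) →
          (univ.filter (fun p : Fin n × Fin n => p.1 ∈ S ∧ p.2 ∈ S ∧ ∀ k, r k p ∈ S)).card ≤ ℓ * n))
      ⊆ (univ.filter (fun S : Finset (Fin n) => S.card ^ (ℓ + 2) ≤ n ^ (ℓ + 1))).biUnion
        (fun S => univ.filter (fun r : Fin ℓ → (Fin n × Fin n → Fin n) =>
          t ≤ (univ.filter (fun p : Fin n × Fin n => p.1 ∈ S ∧ p.2 ∈ S ∧ ∀ k, r k p ∈ S)).card)) := by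
    intro r hr
    simp only [mem_filter, mem_univ, true_and, not_forall] at hr
    obtain ⟨S, hS, hcount⟩ := hr
    refine Finset.mem_biUnion.2 ⟨S, by simp [hS], ?_⟩
    simp only [mem_filter, mem_univ, true_and]
    omega
  calc _ ≤ ((univ.filter (fun S : Finset (Fin n) => S.card ^ (ℓ + 2) ≤ n ^ (ℓ + 1))).biUnion
        (fun S => univ.filter (fun r : Fin ℓ → (Fin n × Fin n → Fin n) =>
          t ≤ (univ.filter (fun p : Fin n × Fin n => p.1 ∈ S ∧ p.2 ∈ S ∧ ∀ k, r k p ∈ S)).card))).card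
          * t.factorial := Nat.mul_le_mul_right _ (Finset.card_le_card step1)
    _ ≤ (∑ S ∈ univ.filter (fun S : Finset (Fin n) => S.card ^ (ℓ + 2) ≤ n ^ (ℓ + 1)),
          (univ.filter (fun r : Fin ℓ → (Fin n × Fin n → Fin n) =>
            t ≤ (univ.filter (fun p : Fin n × Fin n => p.1 ∈ S ∧ p.2 ∈ S ∧ ∀ k, r k p ∈ S)).card)).card)
          * t.factorial := Nat.mul_le_mul_right _ Finset.card_biUnion_le
    _ = ∑ S ∈ univ.filter (fun S : Finset (Fin n) => S.card ^ (ℓ + 2) ≤ n ^ (ℓ + 1)),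
          (univ.filter (fun r : Fin ℓ → (Fin n × Fin n → Fin n) =>
            t ≤ (univ.filter (fun p : Fin n × Fin n => p.1 ∈ S ∧ p.2 ∈ S ∧ ∀ k, r k p ∈ S)).card)).card
          * t.factorial := Finset.sum_mul ..
    _ ≤ ∑ S ∈ univ.filter (fun S : Finset (Fin n) => S.card ^ (ℓ + 2) ≤ n ^ (ℓ + 1)),
          n ^ t * (n ^ (n*n)) ^ ℓ := by
        apply Finset.sum_le_sum
        intro S hS
        simp only [mem_filter, mem_univ, true_and] at hS
        calc _ ≤ ((S.card * S.card).choose t * (S.card ^ t * n ^ (n*n - t)) ^ ℓ) * t.factorial :=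
              Nat.mul_le_mul_right _ (cardBadS' S t)
          _ ≤ _ := perS' _ _ hS htn
    _ ≤ 2 ^ n * (n ^ t * (n ^ (n*n)) ^ ℓ) := by
        rw [Finset.sum_const, smul_eq_mul]
        apply Nat.mul_le_mul_right
        calc _ ≤ (univ : Finset (Finset (Fin n))).card := Finset.card_le_card (filter_subset _ _)
          _ = 2 ^ n := by rw [card_univ, Fintype.card_finset, Fintype.card_fin]
    _ = _ := by ring

lemma lowerB (hℓ5 : 5 ≤ ℓ) (hn : ℓ + 1 ≤ n)
    [DecidablePred (fun r : Fin ℓ → (Fin n × Fin n → Fin n) =>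
        ∀ S : Finset (Fin n), S.card ^ (ℓ + 2) ≤ n ^ (ℓ + 1) →
          (univ.filter (fun p : Fin n × Fin n => p.1 ∈ S ∧ p.2 ∈ S ∧ ∀ k, r k p ∈ S)).card ≤ ℓ * n)] :
    1 - (486/3125 : ℝ)^n ≤
      (((univ.filter (fun r : Fin ℓ → (Fin n × Fin n → Fin n) =>
        ∀ S : Finset (Fin n), S.card ^ (ℓ + 2) ≤ n ^ (ℓ + 1) →
          (univ.filter (fun p : Fin n × Fin n => p.1 ∈ S ∧ p.2 ∈ S ∧ ∀ k, r k p ∈ S)).card ≤ ℓ * n)).card : ℕ) : ℝ)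
        / (((n ^ (n*n)) ^ ℓ : ℕ) : ℝ) := by
  classical
  rw [Finset.filter_congr_decidable]
  have hn1 : 1 ≤ n := by omega
  have hnR : (0:ℝ) < (n:ℝ) := by exact_mod_cast hn1
  have hNpos : (0:ℝ) < (((n ^ (n*n)) ^ ℓ : ℕ) : ℝ) := by positivity
  set t := ℓ * n + 1 with ht
  have hsplit : (univ.filter (fun r : Fin ℓ → (Fin n × Fin n → Fin n) =>
      ∀ S : Finset (Fin n), S.card ^ (ℓ + 2) ≤ n ^ (ℓ + 1) →
        (univ.filter (fun p : Fin n × Fin n => p.1 ∈ S ∧ p.2 ∈ S ∧ ∀ k, r k p ∈ S)).card ≤ ℓ * n)).card + (univ.filter (fun r => ¬ (fun r : Fin ℓ → (Fin n × Fin n → Fin n) =>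
      ∀ S : Finset (Fin n), S.card ^ (ℓ + 2) ≤ n ^ (ℓ + 1) →
        (univ.filter (fun p : Fin n × Fin n => p.1 ∈ S ∧ p.2 ∈ S ∧ ∀ k, r k p ∈ S)).card ≤ ℓ * n) r)).card
      = (n ^ (n*n)) ^ ℓ := by
    rw [Finset.card_filter_add_card_filter_not, card_univ]
    rw [← Nat.card_eq_fintype_card]
    simp [Nat.card_fun, Fintype.card_prod, Fintype.card_fin, Nat.card_eq_fintype_card]
  have hbad : ((univ.filter (fun r => ¬ (fun r : Fin ℓ → (Fin n × Fin n → Fin n) =>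
      ∀ S : Finset (Fin n), S.card ^ (ℓ + 2) ≤ n ^ (ℓ + 1) →
        (univ.filter (fun p : Fin n × Fin n => p.1 ∈ S ∧ p.2 ∈ S ∧ ∀ k, r k p ∈ S)).card ≤ ℓ * n) r)).card : ℝ)
      ≤ (486/3125 : ℝ)^n * (((n ^ (n*n)) ^ ℓ : ℕ) : ℝ) := by
    have h1 : ((univ.filter (fun r => ¬ (fun r : Fin ℓ → (Fin n × Fin n → Fin n) =>
      ∀ S : Finset (Fin n), S.card ^ (ℓ + 2) ≤ n ^ (ℓ + 1) →
        (univ.filter (fun p : Fin n × Fin n => p.1 ∈ S ∧ p.2 ∈ S ∧ ∀ k, r k p ∈ S)).card ≤ ℓ * n) r)).card : ℝ) * t.factorial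
        ≤ 2 ^ n * (n:ℝ) ^ t * ((n:ℝ) ^ (n*n)) ^ ℓ := by
      exact_mod_cast mainBoundNat' hℓ5 hn
    have h2 := analysis' ℓ n hℓ5 hn1
    have hfac : (0:ℝ) < t.factorial := by exact_mod_cast t.factorial_pos
    have hNcast : (((n ^ (n*n)) ^ ℓ : ℕ) : ℝ) = ((n:ℝ) ^ (n*n)) ^ ℓ := by push_cast; rfl
    rw [hNcast]
    calc ((univ.filter (fun r => ¬ (fun r : Fin ℓ → (Fin n × Fin n → Fin n) =>
      ∀ S : Finset (Fin n), S.card ^ (ℓ + 2) ≤ n ^ (ℓ + 1) →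
        (univ.filter (fun p : Fin n × Fin n => p.1 ∈ S ∧ p.2 ∈ S ∧ ∀ k, r k p ∈ S)).card ≤ ℓ * n) r)).card : ℝ)
        = ((univ.filter (fun r => ¬ (fun r : Fin ℓ → (Fin n × Fin n → Fin n) =>
      ∀ S : Finset (Fin n), S.card ^ (ℓ + 2) ≤ n ^ (ℓ + 1) →
        (univ.filter (fun p : Fin n × Fin n => p.1 ∈ S ∧ p.2 ∈ S ∧ ∀ k, r k p ∈ S)).card ≤ ℓ * n) r)).card : ℝ) * t.factorial / t.factorial := by
          field_simp
      _ ≤ 2 ^ n * (n:ℝ) ^ t * ((n:ℝ) ^ (n*n)) ^ ℓ / t.factorial := by gcongr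
      _ = (2 ^ n * (n:ℝ) ^ t / t.factorial) * ((n:ℝ) ^ (n*n)) ^ ℓ := by ring
      _ ≤ (486/3125 : ℝ)^n * ((n:ℝ) ^ (n*n)) ^ ℓ :=
          mul_le_mul_of_nonneg_right h2 (by positivity)
  rw [le_div_iff₀ hNpos]
  have hcast : ((univ.filter (fun r : Fin ℓ → (Fin n × Fin n → Fin n) =>
      ∀ S : Finset (Fin n), S.card ^ (ℓ + 2) ≤ n ^ (ℓ + 1) →
        (univ.filter (fun p : Fin n × Fin n => p.1 ∈ S ∧ p.2 ∈ S ∧ ∀ k, r k p ∈ S)).card ≤ ℓ * n)).card : ℝ) + ((univ.filter (fun r => ¬ (fun r : Fin ℓ → (Fin n × Fin n → Fin n) =>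
      ∀ S : Finset (Fin n), S.card ^ (ℓ + 2) ≤ n ^ (ℓ + 1) →
        (univ.filter (fun p : Fin n × Fin n => p.1 ∈ S ∧ p.2 ∈ S ∧ ∀ k, r k p ∈ S)).card ≤ ℓ * n) r)).card : ℝ)
      = (((n ^ (n*n)) ^ ℓ : ℕ) : ℝ) := by exact_mod_cast congrArg (Nat.cast : ℕ → ℝ) hsplit
  have hgoal : (1 - (486/3125:ℝ)^n) * (((n ^ (n*n)) ^ ℓ : ℕ) : ℝ)
      ≤ ((univ.filter (fun r : Fin ℓ → (Fin n × Fin n → Fin n) =>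
      ∀ S : Finset (Fin n), S.card ^ (ℓ + 2) ≤ n ^ (ℓ + 1) →
        (univ.filter (fun p : Fin n × Fin n => p.1 ∈ S ∧ p.2 ∈ S ∧ ∀ k, r k p ∈ S)).card ≤ ℓ * n)).card : ℝ) := by nlinarith [hbad, hNpos, hcast]
  exact hgoal

end helpers

/-- Lemma 2: with probability `1 - o(1)` over a uniformly random `ℓ`-tuple of functions
`r : [n]×[n] → [n]`, every `S ⊆ [n]` with `|S|^(ℓ+2) ≤ n^(ℓ+1)` spans at most `ℓ·n`
ordered pairs `(i,j) ∈ S×S` with `r_k(i,j) ∈ S` for all `k`. -/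
theorem lemma_rand (ℓ : ℕ) (hℓ : 4 < ℓ) :
    Tendsto (fun n : ℕ =>
      (Nat.card {r : Fin ℓ → (Fin n × Fin n → Fin n) //
          ∀ S : Finset (Fin n), S.card ^ (ℓ + 2) ≤ n ^ (ℓ + 1) →
            Nat.card {p : Fin n × Fin n //
                p.1 ∈ S ∧ p.2 ∈ S ∧ ∀ k : Fin ℓ, r k p ∈ S} ≤ ℓ * n} : ℝ)
        / (Nat.card (Fin ℓ → (Fin n × Fin n → Fin n)) : ℝ))
      atTop (nhds 1) := by
  classical
  have hℓ5 : 5 ≤ ℓ := hℓ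
  -- rewrite the counts as Finset cards
  have inner : ∀ (n : ℕ) (r : Fin ℓ → (Fin n × Fin n → Fin n)) (S : Finset (Fin n)),
      Nat.card {p : Fin n × Fin n // p.1 ∈ S ∧ p.2 ∈ S ∧ ∀ k : Fin ℓ, r k p ∈ S}
        = (univ.filter (fun p : Fin n × Fin n => p.1 ∈ S ∧ p.2 ∈ S ∧ ∀ k, r k p ∈ S)).card := by
    intro n r S
    rw [Nat.card_eq_fintype_card]
    convert Fintype.card_subtype _
  have outer : ∀ n : ℕ,
      Nat.card {r : Fin ℓ → (Fin n × Fin n → Fin n) //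
          ∀ S : Finset (Fin n), S.card ^ (ℓ + 2) ≤ n ^ (ℓ + 1) →
            Nat.card {p : Fin n × Fin n //
                p.1 ∈ S ∧ p.2 ∈ S ∧ ∀ k : Fin ℓ, r k p ∈ S} ≤ ℓ * n}
        = (univ.filter (fun r : Fin ℓ → (Fin n × Fin n → Fin n) =>
            ∀ S : Finset (Fin n), S.card ^ (ℓ + 2) ≤ n ^ (ℓ + 1) →
              (univ.filter (fun p : Fin n × Fin n => p.1 ∈ S ∧ p.2 ∈ S ∧ ∀ k, r k p ∈ S)).card ≤ ℓ * n)).card := by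
    intro n
    rw [Nat.card_eq_fintype_card]
    rw [Fintype.card_subtype]
    congr 1
    apply Finset.filter_congr
    intro r _
    simp only [inner n r]
  have hN : ∀ n : ℕ, Nat.card (Fin ℓ → (Fin n × Fin n → Fin n)) = (n ^ (n*n)) ^ ℓ := by
    intro n
    simp [Nat.card_eq_fintype_card, Fintype.card_fun, Fintype.card_prod, Fintype.card_fin]
  -- squeeze
  apply tendsto_of_tendsto_of_tendsto_of_le_of_le'
    (g := fun n : ℕ => 1 - (486/3125 : ℝ)^n) (h := fun _ : ℕ => (1:ℝ))
  · have h0 : Tendsto (fun n : ℕ => (486/3125 : ℝ)^n) atTop (nhds 0) :=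
      tendsto_pow_atTop_nhds_zero_of_lt_one (by norm_num) (by norm_num)
    simpa using tendsto_const_nhds.sub h0
  · exact tendsto_const_nhds
  · -- lower bound eventually
    filter_upwards [eventually_ge_atTop (ℓ+1)] with n hn
    rw [outer n, hN n]
    exact lowerB hℓ5 hn
  · -- upper bound eventually
    filter_upwards [eventually_ge_atTop 1] with n hn
    have hNpos : (0:ℝ) < ((n:ℝ) ^ (n*n)) ^ ℓ := by
      have : (0:ℝ) < (n:ℝ) := by exact_mod_cast hn
      positivity
    rw [outer n, hN n]
    rw [div_le_one (by exact_mod_cast hNpos)]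
    have : (univ.filter (fun r : Fin ℓ → (Fin n × Fin n → Fin n) =>
        ∀ S : Finset (Fin n), S.card ^ (ℓ + 2) ≤ n ^ (ℓ + 1) →
          (univ.filter (fun p : Fin n × Fin n => p.1 ∈ S ∧ p.2 ∈ S ∧ ∀ k, r k p ∈ S)).card ≤ ℓ * n)).card
        ≤ (n ^ (n*n)) ^ ℓ := by
      calc _ ≤ (univ : Finset (Fin ℓ → (Fin n × Fin n → Fin n))).card :=
            Finset.card_le_card (filter_subset _ _)
        _ = _ := by rw [card_univ, ← Nat.card_eq_fintype_card, hN n]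
    exact_mod_cast this
end

section
/- Let z be the n×n matrix of Boolean pairs with diagonal entries (1,0) and off-diagonal entries (0,1). Then no two distinct rows of z are matching, but for any i₁ ≠ i₂, changing z_{i₁,i₂,1} and z_{i₂,i₁,1} from 0 to 1 makes rows i₁ and i₂ matching. -/
def matchingEntries (a b : Bool × Bool) : Prop := (a.1 && b.1) || (a.2 && b.2)

def rowsMatching {n : ℕ} (x : Fin n → Fin n → Bool × Bool) (i₁ i₂ : Fin n) : Prop :=
  ∀ j : Fin n, matchingEntries (x i₁ j) (x i₂ j)

/-- The matrix with diagonal `(1,0)` and off-diagonal `(0,1)`. -/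
def zMatrix (n : ℕ) : Fin n → Fin n → Bool × Bool :=
  fun i j => if i = j then (true, false) else (false, true)

theorem zMatrix_rows (n : ℕ) (i₁ i₂ : Fin n) (h : i₁ ≠ i₂) :
    ¬ rowsMatching (zMatrix n) i₁ i₂ ∧
    rowsMatching (fun i j =>
      if (i = i₁ ∧ j = i₂) ∨ (i = i₂ ∧ j = i₁) then (true, (zMatrix n i j).2)
      else zMatrix n i j) i₁ i₂ := by
  constructor
  · intro hm
    have := hm i₂
    simp [zMatrix, matchingEntries, h, h.symm] at this
  · intro j
    unfold matchingEntries zMatrix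
    by_cases h1 : j = i₁ <;> by_cases h2 : j = i₂ <;>
      simp_all [h.symm, Ne.symm h, eq_comm]
end

section
/- Let z be the n×n matrix of Boolean pairs with diagonal (1,0) and off-diagonal (0,1). Any partial assignment ρ consistent with z such that for every unordered pair {i₁,i₂} of distinct indices, both variables z_{i₁,i₂,1} and z_{i₂,i₁,1} are unread by ρ, fails to certify that no two rows can be made matching; hence any certificate that z contains no pair of rows extendable to a matching pair (with no bad rows) must read at least one of z_{i₁,i₂,1}, z_{i₂,i₁,1} for each pair, and thus has size at least n(n−1)/2. -/
open Finset

/-- Rows `i₁`, `i₂` of `x` are matching. -/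
def RowsMatch {n : ℕ} (x : Fin n → Fin n → Fin 2 → Bool) (i₁ i₂ : Fin n) : Prop :=
  ∀ j : Fin n, ∃ b : Fin 2, x i₁ j b = true ∧ x i₂ j b = true

/-- Row `i` of `x` is bad: some entry is `(0,0)`. -/
def BadRow {n : ℕ} (x : Fin n → Fin n → Fin 2 → Bool) (i : Fin n) : Prop :=
  ∃ j : Fin n, ∀ b : Fin 2, x i j b = false

/-- `x` is consistent with the partial input `ρ` (agrees on all read positions). -/
def ConsistentWith {n : ℕ} (ρ : Fin n → Fin n → Fin 2 → Option Bool)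
    (x : Fin n → Fin n → Fin 2 → Bool) : Prop :=
  ∀ i j b, ∀ v : Bool, ρ i j b = some v → x i j b = v

/-- `ρ` certifies that no consistent completion contains a matching pair of distinct rows
with no bad rows. -/
def CertifiesNoMatch {n : ℕ} (ρ : Fin n → Fin n → Fin 2 → Option Bool) : Prop :=
  ∀ x : Fin n → Fin n → Fin 2 → Bool, ConsistentWith ρ x →
    ¬ ∃ i₁ i₂ : Fin n, i₁ ≠ i₂ ∧ RowsMatch x i₁ i₂ ∧ ∀ i : Fin n, ¬ BadRow x i

/-- The input with diagonal entries `(1,0)` and off-diagonal entries `(0,1)`. -/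
def zInput (n : ℕ) : Fin n → Fin n → Fin 2 → Bool :=
  fun i j b => if i = j then b = 0 else b = 1

/-- Key lemma: if both first-coordinate variables at `(i₁,i₂)` and `(i₂,i₁)` are unread,
`ρ` cannot certify. -/
lemma not_cert_of_unread {n : ℕ} (ρ : Fin n → Fin n → Fin 2 → Option Bool)
    (hcons : ConsistentWith ρ (zInput n)) (i₁ i₂ : Fin n) (hne : i₁ ≠ i₂)
    (h1 : ρ i₁ i₂ 0 = none) (h2 : ρ i₂ i₁ 0 = none) : ¬ CertifiesNoMatch ρ := by
  intro hc
  set x : Fin n → Fin n → Fin 2 → Bool := fun i j b =>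
    if (i = i₁ ∧ j = i₂ ∧ b = 0) ∨ (i = i₂ ∧ j = i₁ ∧ b = 0) then true
    else zInput n i j b with hx
  have hxz : ∀ i j b, zInput n i j b = true → x i j b = true := by
    intro i j b h
    rw [hx]; dsimp only; split <;> simp [h]
  have hconsx : ConsistentWith ρ x := by
    intro i j b v h
    rw [hx]; dsimp only
    split
    · rename_i hcond
      rcases hcond with ⟨hi, hj, hb⟩ | ⟨hi, hj, hb⟩ <;> subst hi <;> subst hj <;> subst hb <;>
        simp [h1, h2] at h
    · exact hcons i j b v h
  refine hc x hconsx ⟨i₁, i₂, hne, ?_, ?_⟩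
  · intro j
    by_cases hj1 : j = i₁
    · subst hj1
      refine ⟨0, ?_, ?_⟩
      · exact hxz _ _ _ (by simp [zInput])
      · rw [hx]; simp
    · by_cases hj2 : j = i₂
      · subst hj2
        refine ⟨0, ?_, ?_⟩
        · rw [hx]; simp
        · exact hxz _ _ _ (by simp [zInput])
      · have e1 : i₁ ≠ j := fun h => hj1 h.symm
        have e2 : i₂ ≠ j := fun h => hj2 h.symm
        refine ⟨1, hxz _ _ _ ?_, hxz _ _ _ ?_⟩
        · simp [zInput, e1]
        · simp [zInput, e2]
  · rintro i ⟨j, hbad⟩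
    by_cases hij : i = j
    · subst hij
      have := hxz i i 0 (by simp [zInput])
      rw [hbad 0] at this; exact Bool.false_ne_true this
    · have := hxz i j 1 (by simp [zInput, hij])
      rw [hbad 1] at this; exact Bool.false_ne_true this

lemma card_lt_pairs (n : ℕ) :
    ((Finset.univ : Finset (Fin n × Fin n)).filter (fun p => p.1 < p.2)).card
      = n * (n - 1) / 2 := by
  set s := (Finset.univ : Finset (Fin n × Fin n)).filter (fun p => p.1 < p.2) with hs
  set s' := (Finset.univ : Finset (Fin n × Fin n)).filter (fun p => p.2 < p.1) with hs'
  have himg : s' = s.image Prod.swap := by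
    ext p
    simp only [hs, hs', Finset.mem_image, Finset.mem_filter, Finset.mem_univ, true_and]
    constructor
    · intro h; exact ⟨p.swap, h, Prod.swap_swap p⟩
    · rintro ⟨q, hq, rfl⟩; exact hq
  have hcards : s'.card = s.card := by
    rw [himg, Finset.card_image_of_injective _ Prod.swap_injective]
  have hdisj : Disjoint s s' := by
    rw [Finset.disjoint_left]
    intro p hp hp'
    simp only [hs, hs', Finset.mem_filter] at hp hp'
    exact absurd hp'.2 (lt_asymm hp.2)
  have hunion : s ∪ s' = (Finset.univ : Finset (Fin n)).offDiag := by
    ext p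
    rw [Finset.mem_union, hs, hs', Finset.mem_filter, Finset.mem_filter, Finset.mem_offDiag]
    constructor
    · rintro (⟨-, h'⟩ | ⟨-, h'⟩)
      · exact ⟨Finset.mem_univ _, Finset.mem_univ _, ne_of_lt h'⟩
      · exact ⟨Finset.mem_univ _, Finset.mem_univ _, ne_of_gt h'⟩
    · rintro ⟨-, -, h⟩
      rcases lt_or_gt_of_ne h with h' | h'
      · exact Or.inl ⟨Finset.mem_univ _, h'⟩
      · exact Or.inr ⟨Finset.mem_univ _, h'⟩
  have hcard : 2 * s.card = n * n - n := by
    have := Finset.card_union_of_disjoint hdisj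
    rw [hunion, Finset.offDiag_card, Finset.card_univ, Fintype.card_fin, hcards] at this
    omega
  have hmul : n * (n - 1) = n * n - n := by
    rw [← Nat.pred_eq_sub_one, Nat.mul_pred]
  omega

/-- A partial input consistent with `z` leaving, for every pair of distinct indices `i₁,i₂`,
both first-coordinate variables at positions `(i₁,i₂)` and `(i₂,i₁)` unread cannot certify
that no completion has a matching pair of rows (with no bad rows); hence any such certificate
must read at least `n(n-1)/2` variables. -/
theorem cert_lower_bound (n : ℕ) (hn : 2 ≤ n)
    (ρ : Fin n → Fin n → Fin 2 → Option Bool)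
    (hcons : ConsistentWith ρ (zInput n)) :
    ((∀ i₁ i₂ : Fin n, i₁ ≠ i₂ → ρ i₁ i₂ 0 = none ∧ ρ i₂ i₁ 0 = none) →
      ¬ CertifiesNoMatch ρ) ∧
    (CertifiesNoMatch ρ →
      n * (n - 1) / 2 ≤ (Finset.univ.filter
        (fun p : Fin n × Fin n × Fin 2 => ρ p.1 p.2.1 p.2.2 ≠ none)).card) := by
  constructor
  · intro h
    have i₁ : Fin n := ⟨0, by omega⟩
    have i₂ : Fin n := ⟨1, by omega⟩
    have hne : (⟨0, by omega⟩ : Fin n) ≠ (⟨1, by omega⟩ : Fin n) := by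
      intro hh; simpa using congrArg Fin.val hh
    obtain ⟨h1, h2⟩ := h _ _ hne
    exact not_cert_of_unread ρ hcons _ _ hne h1 h2
  · intro hc
    rw [← card_lt_pairs n]
    apply Finset.card_le_card_of_injOn
      (fun p => if ρ p.1 p.2 0 ≠ none then (p.1, p.2, 0) else (p.2, p.1, 0))
    · intro p hp
      rw [Finset.mem_coe, Finset.mem_filter] at hp
      rw [Finset.mem_coe, Finset.mem_filter]
      refine ⟨Finset.mem_univ _, ?_⟩
      have hne : p.1 ≠ p.2 := ne_of_lt hp.2
      have hor : ρ p.1 p.2 0 ≠ none ∨ ρ p.2 p.1 0 ≠ none := by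
        by_contra hcon
        push_neg at hcon
        exact not_cert_of_unread ρ hcons _ _ hne hcon.1 hcon.2 hc
      beta_reduce
      split
      · rename_i h; simpa using h
      · rename_i h; push_neg at h
        rcases hor with h' | h'
        · exact absurd h h'
        · simpa using h'
    · intro p hp q hq hpq
      simp only [Finset.mem_coe, Finset.mem_filter, Finset.mem_univ, true_and] at hp hq
      dsimp only at hpq
      split at hpq <;> split at hpq <;>
        simp only [Prod.mk.injEq] at hpq
      · exact Prod.ext_iff.mpr ⟨hpq.1, hpq.2.1⟩
      · rw [hpq.1, hpq.2.1] at hp; exact absurd hq (lt_asymm hp)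
      · rw [hpq.1, hpq.2.1] at hp; exact absurd hq (lt_asymm hp)
      · exact Prod.ext_iff.mpr ⟨hpq.2.1, hpq.1⟩
end
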